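/- Let y ∈ ℝ^M be a vector with all entries non-positive, and let i* be an index minimizing |yᵢ|. Then the standard basis vector e_{i*} is a minimizer of ‖x − y‖² over all x ∈ ℝ^M satisfying x ≥ 0 (elementwise) and ‖x‖ = 1. -/

import Mathlib

/-- projection onto non-negative orthant ∩ unit sphere for a non-positive
vector is the canonical vector at an index of minimal |yᵢ|. -/
theorem stmt7 {M : ℕ} (y : EuclideanSpace ℝ (Fin M)) (hy : ∀ i, y i ≤ 0)
    (istar : Fin M) (hmin : ∀ j, |y istar| ≤ |y j|) :
    ∀ x : EuclideanSpace ℝ (Fin M), (∀ i, 0 ≤ x i) → ‖x‖ = 1 →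
      ‖(EuclideanSpace.single istar (1 : ℝ)) - y‖ ^ 2 ≤ ‖x - y‖ ^ 2 := by
  intro x hx hnx
  have hey : ∀ j, y j ≤ y istar := by
    intro j
    have h1 := hmin j
    rw [abs_of_nonpos (hy istar), abs_of_nonpos (hy j)] at h1
    linarith
  -- key inner product inequality
  have hsum1 : (1 : ℝ) ≤ ∑ i, x i := by
    have hs0 : (0 : ℝ) ≤ ∑ i, x i := Finset.sum_nonneg fun i _ => hx i
    have hsq : ∑ i, (x i)^2 ≤ (∑ i, x i)^2 := by
      calc ∑ i, (x i)^2 ≤ ∑ i, x i * (∑ j, x j) := by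
            apply Finset.sum_le_sum
            intro i _
            rw [pow_two]
            exact mul_le_mul_of_nonneg_left (Finset.single_le_sum (fun j _ => hx j) (Finset.mem_univ i)) (hx i)
        _ = (∑ i, x i)^2 := by rw [← Finset.sum_mul, pow_two]
    have hn : ∑ i, (x i)^2 = 1 := by
      have := EuclideanSpace.norm_eq x
      rw [hnx] at this
      have h2 : Real.sqrt (∑ i, x i ^ 2) = 1 := by
        simpa [sq_abs] using this.symm
      nlinarith [Real.sq_sqrt (Finset.sum_nonneg (fun i (_ : i ∈ Finset.univ) => sq_nonneg (x i)))]
    nlinarith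
  have hinner : inner ℝ x y ≤ (inner ℝ (EuclideanSpace.single istar (1 : ℝ)) y : ℝ) := by
    rw [EuclideanSpace.inner_single_left]
    simp only [map_one, one_mul, RCLike.inner_apply, PiLp.inner_apply, RCLike.conj_to_real]
    rw [show (∑ i, y i * x i) = ∑ i, x i * y i from Finset.sum_congr rfl fun i _ => mul_comm _ _]
    calc ∑ i, x i * y i ≤ ∑ i, x i * y istar := by
          apply Finset.sum_le_sum
          intro i _
          exact mul_le_mul_of_nonneg_left (hey i) (hx i)
      _ = (∑ i, x i) * y istar := by rw [Finset.sum_mul]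
      _ ≤ 1 * y istar := mul_le_mul_of_nonpos_right hsum1 (hy istar)
      _ = y istar := one_mul _
  have he : ‖EuclideanSpace.single istar (1 : ℝ)‖ = 1 := by
    simp [EuclideanSpace.norm_single]
  have h1 := norm_sub_sq_real (EuclideanSpace.single istar (1 : ℝ)) y
  have h2 := norm_sub_sq_real x y
  rw [h1, h2, he, hnx]
  nlinarith [hinner]
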